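/- Let ℝ^{4,2} = D₁ ⊕⊥ D₂ be a Dupin cyclide and σ_a a Lie inversion (⟨a,a⟩ ≠ 0). Let s₁ ∈ D₁ and s₂ ∈ D₂ be nonzero isotropic vectors (spanning a contact element f = span{s₁,s₂} of the cyclide) with (⟨s₁,a⟩, ⟨s₂,a⟩) ≠ (0,0). Then r := ⟨s₂,a⟩s₁ − ⟨s₁,a⟩s₂ is a nonzero isotropic vector with ⟨r,a⟩ = 0 and σ_a(r) = r, and r lies in both contact elements span{s₁,s₂} and σ_a(span{s₁,s₂}) = span{σ_a(s₁), σ_a(s₂)}. Hence the Dupin cyclides D₁ ⊕⊥ D₂ and σ_a(D₁) ⊕⊥ σ_a(D₂) envelop the common sphere congruence given in each contact element f by f ∩ a^⊥, i.e. two Dupin cyclides related by a fixed Lie inversion form a Ribaucour pair. -/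
import Mathlib


noncomputable section

/-- The symmetric bilinear form of signature (4,2) on ℝ⁶, modelling ℝ^{4,2}. -/
def B (x y : Fin 6 → ℝ) : ℝ :=
  x 0 * y 0 + x 1 * y 1 + x 2 * y 2 + x 3 * y 3 - x 4 * y 4 - x 5 * y 5

/-- The Lie inversion with respect to the linear sphere complex `a`. -/
def lieInv (a x : Fin 6 → ℝ) : Fin 6 → ℝ :=
  x - (2 * B x a / B a a) • a

/-- The induced form on the subspace `W` has signature (2,1) (it admits a
spanning pseudo-orthonormal triple of Gram matrix diag(1,1,-1)); in particular
`W` is 3-dimensional. -/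
def SigTwoOne (W : Submodule ℝ (Fin 6 → ℝ)) : Prop :=
  ∃ u v w : Fin 6 → ℝ, Submodule.span ℝ ({u, v, w} : Set (Fin 6 → ℝ)) = W ∧
    B u u = 1 ∧ B v v = 1 ∧ B w w = -1 ∧ B u v = 0 ∧ B u w = 0 ∧ B v w = 0

lemma B_symm (x y : Fin 6 → ℝ) : B x y = B y x := by simp [B]; ring

lemma B_sub_smul_left (x y z : Fin 6 → ℝ) (c d : ℝ) :
    B (c • x - d • y) z = c * B x z - d * B y z := by
  simp only [B, Pi.sub_apply, Pi.smul_apply, smul_eq_mul]; ring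

lemma B_add_right (x y z : Fin 6 → ℝ) : B x (y + z) = B x y + B x z := by
  simp only [B, Pi.add_apply]; ring

lemma B_sub_smul_right (x y z : Fin 6 → ℝ) (c d : ℝ) :
    B z (c • x - d • y) = c * B z x - d * B z y := by
  simp only [B, Pi.sub_apply, Pi.smul_apply, smul_eq_mul]; ring

/-- Two Dupin cyclides related by a fixed Lie inversion form
a Ribaucour pair: in each contact element `span{s₁,s₂}` of the cyclide
`D₁ ⊕⊥ D₂` the sphere `r = ⟨s₂,a⟩s₁ - ⟨s₁,a⟩s₂` is a nonzero isotropic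
vector orthogonal to `a`, fixed by `σ_a`, and common to the contact elements
`span{s₁,s₂}` and `σ_a(span{s₁,s₂}) = span{σ_a(s₁), σ_a(s₂)}` — the enveloped
Ribaucour sphere congruence. -/
theorem stmt_14 (D₁ D₂ : Submodule ℝ (Fin 6 → ℝ))
    (hsig₁ : SigTwoOne D₁) (hsig₂ : SigTwoOne D₂)
    (horth : ∀ x ∈ D₁, ∀ y ∈ D₂, B x y = 0) (hspan : D₁ ⊔ D₂ = ⊤)
    (a s₁ s₂ : Fin 6 → ℝ) (ha : B a a ≠ 0)
    (hs₁D : s₁ ∈ D₁) (hs₂D : s₂ ∈ D₂) (hs₁ : s₁ ≠ 0) (hs₂ : s₂ ≠ 0)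
    (is₁ : B s₁ s₁ = 0) (is₂ : B s₂ s₂ = 0)
    (hna : ¬(B s₁ a = 0 ∧ B s₂ a = 0))
    (r : Fin 6 → ℝ) (hr : r = B s₂ a • s₁ - B s₁ a • s₂) :
    r ≠ 0 ∧ B r r = 0 ∧ B r a = 0 ∧ lieInv a r = r ∧
    r ∈ Submodule.span ℝ ({s₁, s₂} : Set (Fin 6 → ℝ)) ∧
    r ∈ Submodule.span ℝ ({lieInv a s₁, lieInv a s₂} : Set (Fin 6 → ℝ)) := by
  have hB12 : B s₁ s₂ = 0 := horth _ hs₁D _ hs₂D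
  -- if a vector lies in both D₁ and D₂ then it is B-orthogonal to a
  have hkey : ∀ v : Fin 6 → ℝ, v ∈ D₁ → v ∈ D₂ → B v a = 0 := by
    intro v hv1 hv2
    have hatop : a ∈ D₁ ⊔ D₂ := by rw [hspan]; exact Submodule.mem_top
    obtain ⟨y, hy, z, hz, hyz⟩ := Submodule.mem_sup.mp hatop
    have h1 : B v y = 0 := by rw [B_symm]; exact horth _ hy _ hv2
    have h2 : B v z = 0 := horth _ hv1 _ hz
    rw [← hyz, B_add_right, h1, h2, add_zero]
  have hrne : r ≠ 0 := by
    intro h0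
    have heq : B s₂ a • s₁ = B s₁ a • s₂ := by
      have := hr ▸ h0
      rw [sub_eq_zero] at this
      exact this
    by_cases hc : B s₂ a = 0
    · have hd : B s₁ a ≠ 0 := fun h => hna ⟨h, hc⟩
      have : B s₁ a • s₂ = 0 := by rw [← heq, hc, zero_smul]
      exact hs₂ ((smul_eq_zero.mp this).resolve_left hd)
    · have hmem : s₁ ∈ D₂ := by
        have : s₁ = (B s₂ a)⁻¹ • (B s₁ a • s₂) := by
          rw [← heq, smul_smul, inv_mul_cancel₀ hc, one_smul]
        rw [this]
        exact Submodule.smul_mem _ _ (Submodule.smul_mem _ _ hs₂D)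
      have h0' : B s₁ a = 0 := hkey s₁ hs₁D hmem
      have : B s₂ a • s₁ = 0 := by rw [heq, h0', zero_smul]
      exact hs₁ ((smul_eq_zero.mp this).resolve_left hc)
  have hrr : B r r = 0 := by
    rw [hr, B_sub_smul_left, B_sub_smul_right, B_sub_smul_right, is₁, is₂,
      B_symm s₂ s₁, hB12]
    ring
  have hra : B r a = 0 := by rw [hr, B_sub_smul_left]; ring
  refine ⟨hrne, hrr, hra, ?_, ?_, ?_⟩
  · simp [lieInv, hra]
  · rw [hr]
    exact Submodule.sub_mem _
      (Submodule.smul_mem _ _ (Submodule.subset_span (by simp)))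
      (Submodule.smul_mem _ _ (Submodule.subset_span (by simp)))
  · have hrepr : r = B s₂ a • lieInv a s₁ - B s₁ a • lieInv a s₂ := by
      simp only [lieInv, smul_sub, smul_smul, hr]
      funext i
      simp only [Pi.sub_apply, Pi.smul_apply, smul_eq_mul]
      ring
    rw [hrepr]
    exact Submodule.sub_mem _
      (Submodule.smul_mem _ _ (Submodule.subset_span (by simp)))
      (Submodule.smul_mem _ _ (Submodule.subset_span (by simp)))
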